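/- Let A be a finite abelian 2-group and let B be a group containing A as a subgroup of index 2. If B is generated by involutions, then every element of A can be written as a product of an element of order dividing 2 in A and an element of A that is inverted by conjugation by some element of B \ A; equivalently, A is the product of the subgroup Ω(A) = {x ∈ A : x² = 1} with the set of elements of A inverted by some element of B outside A. -/
import Mathlib


/-- If `B` is generated by involutions and contains a finite abelian 2-group `A` as
a subgroup of index 2, then every element of `A` is the product of an element of `A`
of order dividing 2 and an element of `A` inverted by some element of `B \ A`. -/
theorem decomposition_of_index_two_abelian_subgroup (B : Type*) [Group B]
    (A : Subgroup B) [Finite A]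
    (habel : ∀ x y : A, x * y = y * x)
    (hcard : ∃ k, Nat.card A = 2 ^ k)
    (hindex : A.index = 2)
    (hgen : Subgroup.closure {x : B | orderOf x = 2} = ⊤) :
    ∀ a ∈ A, ∃ s t : B, s ∈ A ∧ t ∈ A ∧ s ^ 2 = 1 ∧
      (∃ c : B, c ∉ A ∧ c⁻¹ * t * c = t⁻¹) ∧ a = s * t := by
  intro a ha
  -- A is a proper subgroup
  have hA_ne_top : A ≠ ⊤ := by
    intro h
    rw [h, Subgroup.index_top] at hindex
    norm_num at hindex
  -- there is an involution outside A
  obtain ⟨c, hc2, hcA⟩ : ∃ c : B, orderOf c = 2 ∧ c ∉ A := by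
    by_contra h
    push_neg at h
    have hle : Subgroup.closure {x : B | orderOf x = 2} ≤ A :=
      (Subgroup.closure_le A).2 (fun x hx => h x hx)
    rw [hgen] at hle
    exact hA_ne_top (top_le_iff.mp hle)
  have hcc : c * c = 1 := by
    have := pow_orderOf_eq_one c
    rwa [hc2, pow_two] at this
  have hcinv : c⁻¹ = c := inv_eq_of_mul_eq_one_right hcc
  have hccl : ∀ y : B, c * (c * y) = y := by
    intro y; rw [← mul_assoc, hcc, one_mul]
  have hconjmul : ∀ x y : B, c⁻¹ * (x * y) * c = (c⁻¹ * x * c) * (c⁻¹ * y * c) := by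
    intro x y; group
  have hconjinv : ∀ x : B, c⁻¹ * x⁻¹ * c = (c⁻¹ * x * c)⁻¹ := by
    intro x; group
  have hconjsq : ∀ x : B, (c⁻¹ * x * c) ^ 2 = c⁻¹ * x ^ 2 * c := by
    intro x; rw [hcinv]; simp [pow_two, mul_assoc, hccl]
  have hsig2 : ∀ x : B, c⁻¹ * (c⁻¹ * x * c) * c = x := by
    intro x; rw [hcinv]; simp [mul_assoc, hccl, hcc]
  have hcomm : ∀ x y : B, x ∈ A → y ∈ A → x * y = y * x := by
    intro x y hx hy
    exact Subtype.ext_iff.mp (habel ⟨x, hx⟩ ⟨y, hy⟩)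
  have hmuliff : ∀ x y : B, x * y ∈ A ↔ (x ∈ A ↔ y ∈ A) :=
    fun x y => Subgroup.mul_mem_iff_of_index_two hindex
  have hconjA : ∀ x : B, x ∈ A → c⁻¹ * x * c ∈ A := by
    intro x hx
    have h1 : c⁻¹ * x ∉ A := by
      rw [hmuliff]
      simp only [hx, iff_true]
      intro h; exact hcA (by simpa [hcinv] using h)
    rw [hmuliff]
    constructor
    · intro h; exact absurd h h1
    · intro h; exact absurd h hcA
  -- the generating set of H
  set S₀ : Set B := {x : B | (x ∈ A ∧ x ^ 2 = 1) ∨ (x ∈ A ∧ c⁻¹ * x * c = x⁻¹)} with hS₀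
  set H : Subgroup B := Subgroup.closure S₀ with hH
  have hS₀A : S₀ ⊆ (A : Set B) := by
    rintro x (⟨hx, -⟩ | ⟨hx, -⟩) <;> exact hx
  have hHA : H ≤ A := (Subgroup.closure_le A).2 hS₀A
  -- conjugation by c preserves S₀, hence H
  have hconjS : ∀ x ∈ S₀, c⁻¹ * x * c ∈ S₀ := by
    rintro x (⟨hx, hx2⟩ | ⟨hx, hxi⟩)
    · left
      refine ⟨hconjA x hx, ?_⟩
      rw [hconjsq, hx2, hcinv, mul_one, hcc]
    · right
      refine ⟨hconjA x hx, ?_⟩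
      rw [hsig2, hxi, inv_inv]
  have hconjH : ∀ h ∈ H, c⁻¹ * h * c ∈ H := by
    intro h hh
    induction hh using Subgroup.closure_induction with
    | mem x hx => exact Subgroup.subset_closure (hconjS x hx)
    | one => simpa using one_mem H
    | mul x y hx hy ihx ihy => rw [hconjmul]; exact mul_mem ihx ihy
    | inv x hx ih => rw [hconjinv]; exact inv_mem ih
  -- every element of H has the desired decomposition
  have hdecomp : ∀ h ∈ H, ∃ s t : B, s ∈ A ∧ t ∈ A ∧ s ^ 2 = 1 ∧
      c⁻¹ * t * c = t⁻¹ ∧ h = s * t := by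
    intro h hh
    induction hh using Subgroup.closure_induction with
    | mem x hx =>
        rcases hx with ⟨hxA, hx2⟩ | ⟨hxA, hxi⟩
        · exact ⟨x, 1, hxA, one_mem A, hx2, by simp, by simp⟩
        · exact ⟨1, x, one_mem A, hxA, by simp, hxi, by simp⟩
    | one => exact ⟨1, 1, one_mem A, one_mem A, by simp, by simp, by simp⟩
    | mul x y hx hy ihx ihy =>
        obtain ⟨s₁, t₁, hs₁, ht₁, hs₁2, ht₁i, hxe⟩ := ihx
        obtain ⟨s₂, t₂, hs₂, ht₂, hs₂2, ht₂i, hye⟩ := ihy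
        refine ⟨s₁ * s₂, t₁ * t₂, mul_mem hs₁ hs₂, mul_mem ht₁ ht₂, ?_, ?_, ?_⟩
        · have hco : s₁ * s₂ = s₂ * s₁ := hcomm _ _ hs₁ hs₂
          calc (s₁ * s₂) ^ 2 = s₁ * (s₂ * s₁) * s₂ := by
                rw [pow_two]; rw [mul_assoc, mul_assoc, mul_assoc, ← mul_assoc s₂]
            _ = s₁ * (s₁ * s₂) * s₂ := by rw [hco]
            _ = s₁ ^ 2 * s₂ ^ 2 := by rw [pow_two, pow_two]; group
            _ = 1 := by rw [hs₁2, hs₂2, one_mul]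
        · rw [hconjmul, ht₁i, ht₂i, mul_inv_rev]
          exact hcomm _ _ (inv_mem ht₁) (inv_mem ht₂)
        · rw [hxe, hye]
          have hco : t₁ * s₂ = s₂ * t₁ := hcomm _ _ ht₁ hs₂
          calc s₁ * t₁ * (s₂ * t₂) = s₁ * (t₁ * s₂) * t₂ := by group
            _ = s₁ * (s₂ * t₁) * t₂ := by rw [hco]
            _ = s₁ * s₂ * (t₁ * t₂) := by group
    | inv x hx ih =>
        obtain ⟨s, t, hs, ht, hs2, hti, hxe⟩ := ih
        refine ⟨s, t⁻¹, hs, inv_mem ht, hs2, ?_, ?_⟩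
        · rw [inv_inv, hconjinv, hti, inv_inv]
        · rw [hxe, mul_inv_rev]
          have hsinv : s⁻¹ = s := by
            rw [pow_two] at hs2; exact inv_eq_of_mul_eq_one_right hs2
          rw [hsinv]
          exact hcomm _ _ (inv_mem ht) hs
  -- H ∪ Hc is a subgroup
  set K : Subgroup B :=
    { carrier := {b : B | b ∈ H ∨ ∃ h ∈ H, b = h * c}
      one_mem' := Or.inl (one_mem H)
      mul_mem' := by
        rintro x y (hx | ⟨h₁, hh₁, rfl⟩) (hy | ⟨h₂, hh₂, rfl⟩)
        · exact Or.inl (mul_mem hx hy)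
        · exact Or.inr ⟨x * h₂, mul_mem hx hh₂, by group⟩
        · refine Or.inr ⟨h₁ * (c * y * c⁻¹), mul_mem hh₁ ?_, by group⟩
          have := hconjH y hy
          rwa [hcinv] at this ⊢
        · refine Or.inl ?_
          have heq : h₁ * c * (h₂ * c) = h₁ * (c * h₂ * c⁻¹) * (c * c) := by group
          rw [heq, hcc, mul_one]
          refine mul_mem hh₁ ?_
          have := hconjH h₂ hh₂
          rwa [hcinv] at this ⊢
      inv_mem' := by
        rintro x (hx | ⟨h, hh, rfl⟩)
        · exact Or.inl (inv_mem hx)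
        · refine Or.inr ⟨c * h⁻¹ * c⁻¹, ?_, by rw [mul_inv_rev, hcinv, mul_assoc, hcc, mul_one]⟩
          have := hconjH h⁻¹ (inv_mem hh)
          rwa [hcinv] at this ⊢ } with hK
  -- K contains all involutions, hence K = ⊤
  have hKtop : (⊤ : Subgroup B) ≤ K := by
    rw [← hgen]
    refine (Subgroup.closure_le K).2 ?_
    intro x hx
    have hx2 : x * x = 1 := by
      have := pow_orderOf_eq_one x
      rwa [hx, pow_two] at this
    by_cases hxA : x ∈ A
    · exact Or.inl (Subgroup.subset_closure (Or.inl ⟨hxA, by rw [pow_two]; exact hx2⟩))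
    · -- x = (x*c) * c with x*c ∈ A inverted by c
      have hxcA : x * c ∈ A := by
        rw [hmuliff]
        constructor
        · intro h; exact absurd h hxA
        · intro h; exact absurd h hcA
      have hxinv : x⁻¹ = x := inv_eq_of_mul_eq_one_right hx2
      have hinv : c⁻¹ * (x * c) * c = (x * c)⁻¹ := by
        rw [mul_inv_rev, hcinv, hxinv]
        simp [mul_assoc, hcc, hccl]
      refine Or.inr ⟨x * c, Subgroup.subset_closure (Or.inr ⟨hxcA, hinv⟩), ?_⟩
      rw [mul_assoc, hcc, mul_one]
  -- a ∈ K, and a ∈ A forces a ∈ H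
  have haK : a ∈ K := hKtop (Subgroup.mem_top a)
  have haH : a ∈ H := by
    rcases haK with h | ⟨h, hh, rfl⟩
    · exact h
    · exfalso
      have hcA' : c ∈ A := by
        have : h⁻¹ * (h * c) ∈ A := mul_mem (inv_mem (hHA hh)) ha
        simpa using this
      exact hcA hcA'
  obtain ⟨s, t, hs, ht, hs2, hti, hae⟩ := hdecomp a haH
  exact ⟨s, t, hs, ht, hs2, ⟨c, hcA, hti⟩, hae⟩
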